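/- Let 0 < s < 1, 1 ≤ p < ∞ with sp < 1. The indicator function χ_{Q^m} of the unit cube belongs to W^{s,p}(ℝ^m), i.e., ∫_{ℝ^m}∫_{ℝ^m} |χ_{Q^m}(x) − χ_{Q^m}(y)|^p / |x−y|^{m+sp} dx dy < ∞. -/

import Mathlib

open MeasureTheory Metric Set Filter Function
open scoped ENNReal NNReal Manifold

noncomputable section

/-- `m`-dimensional Euclidean space. -/
abbrev Euc (m : ℕ) := EuclideanSpace ℝ (Fin m)

/-- The `p`-th power of the Gagliardo seminorm of `u` on `Ω`. -/
def gagP (m ν : ℕ) (s p : ℝ) (Ω : Set (Euc m)) (u : Euc m → Euc ν) : ℝ≥0∞ :=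
  ∫⁻ x in Ω, ∫⁻ y in Ω,
    ENNReal.ofReal (‖u x - u y‖ ^ p / ‖x - y‖ ^ ((m : ℝ) + s * p))

/-- The unit cube `[0,1)^m`. -/
def unitCube (m : ℕ) : Set (Euc m) := {x | ∀ i, x i ∈ Set.Ico (0:ℝ) 1}

section WspAux

variable {m : ℕ}


variable {m : ℕ}

lemma volEuc_pi (S : Fin m → Set ℝ) (hS : ∀ i, MeasurableSet (S i)) :
    volume {x : Euc m | ∀ i, x i ∈ S i} = ∏ i, volume (S i) := by
  have e := EuclideanSpace.volume_preserving_symm_measurableEquiv_toLp (Fin m)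
  have hset : {x : Euc m | ∀ i, x i ∈ S i}
      = (MeasurableEquiv.toLp 2 (Fin m → ℝ)).symm ⁻¹' (Set.univ.pi S) := by
    ext x
    simp [Set.mem_pi, MeasurableEquiv.toLp_symm_apply]
  rw [hset, e.measure_preimage (MeasurableSet.univ_pi hS).nullMeasurableSet, volume_pi_pi]

lemma abs_coord_le_norm (x : Euc m) (i : Fin m) : |x i| ≤ ‖x‖ := by
  rw [EuclideanSpace.norm_eq, ← Real.sqrt_sq_eq_abs]
  apply Real.sqrt_le_sqrt
  have := Finset.single_le_sum (f := fun j => ‖x j‖ ^ 2)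
    (fun j _ => sq_nonneg _) (Finset.mem_univ i)
  simpa [Real.norm_eq_abs, sq_abs] using this

lemma measurableSet_unitCube : MeasurableSet (unitCube m) := by
  have : unitCube m
      = (MeasurableEquiv.toLp 2 (Fin m → ℝ)).symm ⁻¹' (Set.univ.pi fun _ => Ico (0:ℝ) 1) := by
    ext x
    simp [unitCube, Set.mem_pi, MeasurableEquiv.toLp_symm_apply]
  rw [this]
  exact (MeasurableEquiv.toLp 2 (Fin m → ℝ)).symm.measurable
    (MeasurableSet.univ_pi fun _ => measurableSet_Ico)

lemma volume_unitCube : volume (unitCube m) = 1 := by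
  have : volume (unitCube m) = ∏ _i : Fin m, volume (Ico (0:ℝ) 1) :=
    volEuc_pi (fun _ => Ico (0:ℝ) 1) (fun _ => measurableSet_Ico)
  rw [this]
  simp [Real.volume_Ico]

lemma volume_shifted_cube (h : Euc m) : volume {x : Euc m | x + h ∈ unitCube m} = 1 := by
  have hset : {x : Euc m | x + h ∈ unitCube m}
      = {x : Euc m | ∀ i, x i ∈ Ico (-h i) (1 - h i)} := by
    ext x
    simp only [unitCube, mem_setOf_eq]
    refine forall_congr' fun i => ?_
    have hadd : (x + h) i = x i + h i := rfl
    rw [hadd, mem_Ico, mem_Ico]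
    constructor <;> rintro ⟨h1, h2⟩ <;> exact ⟨by linarith, by linarith⟩
  rw [hset, volEuc_pi _ (fun _ => measurableSet_Ico)]
  have : ∀ i : Fin m, volume (Ico (-h i) (1 - h i)) = 1 := by
    intro i
    rw [Real.volume_Ico, show 1 - h i - -h i = 1 by ring, ENNReal.ofReal_one]
  simp [this]

lemma volume_diff_le (h : Euc m) (hh : ‖h‖ ≤ 1) :
    volume {x : Euc m | (x ∈ unitCube m ∧ x + h ∉ unitCube m)
        ∨ (x ∉ unitCube m ∧ x + h ∈ unitCube m)}
      ≤ ENNReal.ofReal (4 * ‖h‖) * ((m : ℝ≥0∞) * 3 ^ m) := by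
  classical
  set A : Fin m → Set ℝ := fun i => Ico (-|h i|) |h i| ∪ Ico (1 - |h i|) (1 + |h i|) with hA
  set B : Fin m → Set ℝ := fun j => Ico (-|h j|) (1 + |h j|) with hB
  set V : Fin m → Fin m → Set ℝ := fun i j => if j = i then A i else B j with hV
  have hVmeas : ∀ i j, MeasurableSet (V i j) := by
    intro i j
    by_cases hj : j = i <;>
      simp [hV, hj, hA, hB, MeasurableSet.union, measurableSet_Ico]
  have hsub : {x : Euc m | (x ∈ unitCube m ∧ x + h ∉ unitCube m)
        ∨ (x ∉ unitCube m ∧ x + h ∈ unitCube m)}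
      ⊆ ⋃ i, {x : Euc m | ∀ j, x j ∈ V i j} := by
    rintro x hx
    have hadd : ∀ j : Fin m, (x + h) j = x j + h j := fun _ => rfl
    rcases hx with ⟨hx, hxh⟩ | ⟨hx, hxh⟩
    · simp only [unitCube, mem_setOf_eq, not_forall] at hxh
      obtain ⟨i, hi⟩ := hxh
      rw [hadd, mem_Ico, not_and_or, not_le, not_lt] at hi
      refine mem_iUnion.2 ⟨i, fun j => ?_⟩
      have hxj := hx j
      rw [mem_Ico] at hxj
      by_cases hj : j = i
      · subst hj
        simp only [hV, if_pos rfl, hA, mem_union, mem_Ico]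
        rcases hi with hi | hi
        · exact Or.inl ⟨by linarith [abs_nonneg (h j)],
            by linarith [neg_abs_le (h j)]⟩
        · exact Or.inr ⟨by linarith [le_abs_self (h j)],
            by linarith [abs_nonneg (h j)]⟩
      · simp only [hV, if_neg hj, hB, mem_Ico]
        exact ⟨by linarith [abs_nonneg (h j)], by linarith [abs_nonneg (h j)]⟩
    · simp only [unitCube, mem_setOf_eq, not_forall] at hx
      obtain ⟨i, hi⟩ := hx
      rw [mem_Ico, not_and_or, not_le, not_lt] at hi
      refine mem_iUnion.2 ⟨i, fun j => ?_⟩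
      have hxj := hxh j
      rw [hadd, mem_Ico] at hxj
      by_cases hj : j = i
      · subst hj
        simp only [hV, if_pos rfl, hA, mem_union, mem_Ico]
        rcases hi with hi | hi
        · exact Or.inl ⟨by linarith [le_abs_self (h j)],
            by linarith [abs_nonneg (h j)]⟩
        · exact Or.inr ⟨by linarith [abs_nonneg (h j)],
            by linarith [neg_abs_le (h j)]⟩
      · simp only [hV, if_neg hj, hB, mem_Ico]
        exact ⟨by linarith [le_abs_self (h j)], by linarith [neg_abs_le (h j)]⟩
  have hAvol : ∀ i, volume (A i) ≤ ENNReal.ofReal (4 * ‖h‖) := by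
    intro i
    have h1 : volume (Ico (-|h i|) |h i|) = ENNReal.ofReal (2 * |h i|) := by
      rw [Real.volume_Ico, show |h i| - -|h i| = 2 * |h i| by ring]
    have h2 : volume (Ico (1 - |h i|) (1 + |h i|)) = ENNReal.ofReal (2 * |h i|) := by
      rw [Real.volume_Ico, show 1 + |h i| - (1 - |h i|) = 2 * |h i| by ring]
    calc volume (A i) ≤ _ + _ := measure_union_le _ _
      _ = ENNReal.ofReal (2 * |h i|) + ENNReal.ofReal (2 * |h i|) := by rw [h1, h2]
      _ = ENNReal.ofReal (4 * |h i|) := by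
          rw [← ENNReal.ofReal_add (by positivity) (by positivity)]
          ring_nf
      _ ≤ ENNReal.ofReal (4 * ‖h‖) := by
          apply ENNReal.ofReal_le_ofReal
          have := abs_coord_le_norm h i
          linarith
  have hBvol : ∀ j, volume (B j) ≤ 3 := by
    intro j
    rw [hB]
    rw [Real.volume_Ico, show 1 + |h j| - -|h j| = 1 + 2 * |h j| by ring]
    calc ENNReal.ofReal (1 + 2 * |h j|) ≤ ENNReal.ofReal 3 := by
          apply ENNReal.ofReal_le_ofReal
          have := abs_coord_le_norm h j
          linarith
      _ = 3 := by norm_num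
  have hTvol : ∀ i, volume {x : Euc m | ∀ j, x j ∈ V i j}
      ≤ ENNReal.ofReal (4 * ‖h‖) * 3 ^ m := by
    intro i
    rw [volEuc_pi _ (hVmeas i)]
    rw [← Finset.mul_prod_erase Finset.univ _ (Finset.mem_univ i)]
    have hViA : volume (V i i) ≤ ENNReal.ofReal (4 * ‖h‖) := by
      rw [hV]; simp only [if_pos rfl]; exact hAvol i
    have hrest : (∏ j ∈ Finset.univ.erase i, volume (V i j)) ≤ 3 ^ m := by
      calc (∏ j ∈ Finset.univ.erase i, volume (V i j))
          ≤ ∏ _j ∈ Finset.univ.erase i, (3:ℝ≥0∞) := by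
            apply Finset.prod_le_prod'
            intro j hj
            have hj' : j ≠ i := (Finset.mem_erase.1 hj).1
            rw [hV]; simp only [if_neg hj']; exact hBvol j
        _ = 3 ^ (Finset.univ.erase i).card := Finset.prod_const _
        _ ≤ 3 ^ m := by
            apply pow_le_pow_right' (by norm_num)
            calc (Finset.univ.erase i).card ≤ Finset.univ.card :=
                  Finset.card_le_card (Finset.erase_subset _ _)
              _ = m := Finset.card_univ.trans (Fintype.card_fin m)
    exact mul_le_mul' hViA hrest
  calc volume {x : Euc m | (x ∈ unitCube m ∧ x + h ∉ unitCube m)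
        ∨ (x ∉ unitCube m ∧ x + h ∈ unitCube m)}
      ≤ volume (⋃ i, {x : Euc m | ∀ j, x j ∈ V i j}) := measure_mono hsub
    _ ≤ ∑' i, volume {x : Euc m | ∀ j, x j ∈ V i j} := measure_iUnion_le _
    _ ≤ ∑' _i : Fin m, ENNReal.ofReal (4 * ‖h‖) * 3 ^ m := ENNReal.tsum_le_tsum hTvol
    _ = (m : ℝ≥0∞) * (ENNReal.ofReal (4 * ‖h‖) * 3 ^ m) := by
        rw [tsum_fintype]
        simp [Finset.sum_const, Finset.card_univ, nsmul_eq_mul]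
    _ = ENNReal.ofReal (4 * ‖h‖) * ((m : ℝ≥0∞) * 3 ^ m) := by ring



lemma near_finite (hm : 0 < m) {a : ℝ} (ha : 0 < a) (ham : a < m) :
    (∫⁻ x : Euc m in ball 0 1, ENNReal.ofReal (‖x‖ ^ (-a))) < ⊤ := by
  set μ := (volume : Measure (Euc m)).restrict (ball (0 : Euc m) 1) with hμ
  have h_meas : Measurable fun x : Euc m => ‖x‖ ^ (-a) := by fun_prop
  have h_nn : 0 ≤ᵐ[μ] fun x : Euc m => ‖x‖ ^ (-a) :=
    Eventually.of_forall fun x => Real.rpow_nonneg (norm_nonneg _) _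
  have key := lintegral_eq_lintegral_meas_le μ h_nn h_meas.aemeasurable
  rw [show (∫⁻ x : Euc m in ball 0 1, ENNReal.ofReal (‖x‖ ^ (-a)))
      = ∫⁻ x, ENNReal.ofReal (‖x‖ ^ (-a)) ∂μ from rfl, key]
  set g := fun t : ℝ => μ {x : Euc m | t ≤ ‖x‖ ^ (-a)} with hg
  have hball : (volume : Measure (Euc m)) (ball 0 1) < ⊤ := measure_ball_lt_top
  calc ∫⁻ t in Ioi (0:ℝ), g t
      ≤ ∫⁻ t in Ioc (0:ℝ) 1 ∪ Ioi 1, g t := lintegral_mono_set Ioi_subset_Ioc_union_Ioi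
    _ ≤ (∫⁻ t in Ioc (0:ℝ) 1, g t) + ∫⁻ t in Ioi (1:ℝ), g t := lintegral_union_le _ _ _
    _ < ⊤ := by
        refine ENNReal.add_lt_top.2 ⟨?_, ?_⟩
        · have hb : ∀ t ∈ Ioc (0:ℝ) 1, g t ≤ volume (ball (0 : Euc m) 1) := by
            intro t _
            refine le_trans (measure_mono (subset_univ _)) ?_
            rw [hμ, Measure.restrict_apply_univ]
          calc (∫⁻ t in Ioc (0:ℝ) 1, g t)
              ≤ ∫⁻ _ in Ioc (0:ℝ) 1, volume (ball (0 : Euc m) 1) :=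
                setLIntegral_mono' measurableSet_Ioc hb
            _ = volume (ball (0 : Euc m) 1) * volume (Ioc (0:ℝ) 1) := setLIntegral_const _ _
            _ < ⊤ := by
                apply ENNReal.mul_lt_top hball
                simp [Real.volume_Ioc]
        · have hb : ∀ t ∈ Ioi (1:ℝ), g t ≤
              ENNReal.ofReal (t ^ (-(a⁻¹ * m))) * volume (ball (0 : Euc m) 1) := by
            intro t ht
            have ht1 : (1:ℝ) < t := ht
            have ht0 : (0:ℝ) < t := lt_trans one_pos ht1
            have hsub : {x : Euc m | t ≤ ‖x‖ ^ (-a)} ⊆ closedBall 0 (t ^ (-a⁻¹)) := by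
              intro x hx
              simp only [mem_setOf_eq] at hx
              rw [mem_closedBall, dist_zero_right]
              rcases eq_or_lt_of_le (norm_nonneg x) with h0 | h0
              · rw [← h0]; exact Real.rpow_nonneg ht0.le _
              · have := Real.rpow_le_rpow_of_nonpos ht0 hx
                  (neg_nonpos.2 (inv_nonneg.2 ha.le))
                calc ‖x‖ = (‖x‖ ^ (-a)) ^ (-a⁻¹) := by
                      rw [← Real.rpow_mul h0.le, neg_mul_neg,
                        mul_inv_cancel₀ ha.ne', Real.rpow_one]
                  _ ≤ t ^ (-a⁻¹) := this
            have : g t ≤ volume (closedBall (0 : Euc m) (t ^ (-a⁻¹))) :=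
              le_trans (Measure.restrict_apply_le _ _) (measure_mono hsub)
            refine le_trans this ?_
            rw [Measure.addHaar_closedBall _ _ (Real.rpow_nonneg ht0.le _)]
            gcongr
            rw [← Real.rpow_natCast (t ^ (-a⁻¹)) (Module.finrank ℝ (Euc m)),
              ← Real.rpow_mul ht0.le]
            rw [show (Module.finrank ℝ (Euc m) : ℝ) = (m : ℝ) by
              simp [finrank_euclideanSpace]]
            rw [show -a⁻¹ * (m:ℝ) = -(a⁻¹ * m) by ring]
          calc (∫⁻ t in Ioi (1:ℝ), g t)
              ≤ ∫⁻ t in Ioi (1:ℝ),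
                  ENNReal.ofReal (t ^ (-(a⁻¹ * m))) * volume (ball (0 : Euc m) 1) :=
                setLIntegral_mono' measurableSet_Ioi hb
            _ = (∫⁻ t in Ioi (1:ℝ), ENNReal.ofReal (t ^ (-(a⁻¹ * m))))
                  * volume (ball (0 : Euc m) 1) := lintegral_mul_const' _ _ hball.ne
            _ < ⊤ := by
                refine ENNReal.mul_lt_top ?_ hball
                apply IntegrableOn.setLIntegral_lt_top
                have h1 : -(a⁻¹ * (m:ℝ)) < -1 := by
                  have : (1:ℝ) < a⁻¹ * m := by
                    rw [lt_inv_mul_iff₀ ha, mul_one]; exact ham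
                  linarith
                exact integrableOn_Ioi_rpow_of_lt h1 one_pos



lemma far_finite {α : ℝ} (hα : (m:ℝ) < α) :
    (∫⁻ x : Euc m in (ball (0 : Euc m) 1)ᶜ, ENNReal.ofReal (‖x‖ ^ (-α))) < ⊤ := by
  have hα0 : (0:ℝ) ≤ α := le_trans (Nat.cast_nonneg m) hα.le
  have hb : ∀ x : Euc m, x ∈ (ball (0 : Euc m) 1)ᶜ →
      ENNReal.ofReal (‖x‖ ^ (-α)) ≤
        ENNReal.ofReal (2 ^ α) * ENNReal.ofReal ((1 + ‖x‖) ^ (-α)) := by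
    intro x hx
    have hx1 : (1:ℝ) ≤ ‖x‖ := by
      simpa [mem_ball, dist_zero_right, not_lt] using hx
    have hx0 : (0:ℝ) < ‖x‖ := lt_of_lt_of_le one_pos hx1
    rw [← ENNReal.ofReal_mul (by positivity)]
    apply ENNReal.ofReal_le_ofReal
    rw [Real.rpow_neg hx0.le, Real.rpow_neg (by positivity)]
    have hA : (0:ℝ) < ‖x‖ ^ α := Real.rpow_pos_of_pos hx0 _
    have hB : (0:ℝ) < (1 + ‖x‖) ^ α := Real.rpow_pos_of_pos (by positivity) _
    have hBA : (1 + ‖x‖) ^ α ≤ 2 ^ α * ‖x‖ ^ α := by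
      rw [← Real.mul_rpow (by norm_num) hx0.le]
      exact Real.rpow_le_rpow (by positivity) (by linarith) hα0
    rw [inv_eq_one_div, mul_comm ((2:ℝ) ^ α), inv_mul_eq_div,
      div_le_div_iff₀ hA hB, one_mul]
    exact hBA
  calc (∫⁻ x : Euc m in (ball (0 : Euc m) 1)ᶜ, ENNReal.ofReal (‖x‖ ^ (-α)))
      ≤ ∫⁻ x : Euc m in (ball (0 : Euc m) 1)ᶜ,
          ENNReal.ofReal (2 ^ α) * ENNReal.ofReal ((1 + ‖x‖) ^ (-α)) :=
        setLIntegral_mono' measurableSet_ball.compl hb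
    _ ≤ ∫⁻ x : Euc m, ENNReal.ofReal (2 ^ α) * ENNReal.ofReal ((1 + ‖x‖) ^ (-α)) :=
        setLIntegral_le_lintegral _ _
    _ = ENNReal.ofReal (2 ^ α) * ∫⁻ x : Euc m, ENNReal.ofReal ((1 + ‖x‖) ^ (-α)) :=
        lintegral_const_mul' _ _ ENNReal.ofReal_ne_top
    _ < ⊤ := by
        apply ENNReal.mul_lt_top ENNReal.ofReal_lt_top
        apply finite_integral_one_add_norm
        rw [show (Module.finrank ℝ (Euc m) : ℝ) = (m : ℝ) by simp [finrank_euclideanSpace]]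
        exact hα

end WspAux

theorem indicator_cube_mem_Wsp (m : ℕ) (s p : ℝ)
    (hs0 : 0 < s) (hs1 : s < 1) (hp : 1 ≤ p) (hsp : s * p < 1) :
    (∫⁻ x : Euc m, ∫⁻ y : Euc m,
      ENNReal.ofReal
        (|Set.indicator (unitCube m) (fun _ => (1:ℝ)) x
            - Set.indicator (unitCube m) (fun _ => (1:ℝ)) y| ^ p
          / ‖x - y‖ ^ ((m:ℝ) + s * p))) < ⊤ := by
  classical
  have hp0 : p ≠ 0 := by linarith
  rcases Nat.eq_zero_or_pos m with hm0 | hm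
  · subst hm0
    have hu : ∀ x : Euc 0, Set.indicator (unitCube 0) (fun _ => (1:ℝ)) x = 1 :=
      fun x => Set.indicator_of_mem (show x ∈ unitCube 0 from fun i => Fin.elim0 i) _
    simp only [hu, sub_self, abs_zero, Real.zero_rpow hp0, zero_div,
      ENNReal.ofReal_zero, lintegral_zero]
    exact ENNReal.zero_lt_top
  set α : ℝ := (m:ℝ) + s * p with hαdef
  have hm1 : (1:ℝ) ≤ (m:ℝ) := by exact_mod_cast hm
  have hsp0 : 0 < s * p := mul_pos hs0 (by linarith)
  have hα1 : 1 < α := by rw [hαdef]; linarith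
  have hαm : (m:ℝ) < α := by rw [hαdef]; linarith
  have hα0 : 0 < α := by linarith
  set Q := unitCube m with hQdef
  have hQm : MeasurableSet Q := measurableSet_unitCube
  set u : Euc m → ℝ := Set.indicator Q (fun _ => (1:ℝ)) with hu
  set S : Set (Euc m × Euc m) := (Q ×ˢ Qᶜ) ∪ (Qᶜ ×ˢ Q) with hS
  have hSm : MeasurableSet S := (hQm.prod hQm.compl).union (hQm.compl.prod hQm)
  set k : Euc m × Euc m → ℝ≥0∞ := fun z => ENNReal.ofReal (‖z.1 - z.2‖ ^ (-α)) with hk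
  have hkm : Measurable k :=
    (((measurable_fst.sub measurable_snd).norm).pow measurable_const).ennreal_ofReal
  have hpoint : ∀ x y : Euc m,
      ENNReal.ofReal (|u x - u y| ^ p / ‖x - y‖ ^ α) = S.indicator k (x, y) := by
    intro x y
    by_cases hx : x ∈ Q <;> by_cases hy : y ∈ Q
    · have h0 : u x - u y = 0 := by
        simp [hu, Set.indicator_of_mem hx, Set.indicator_of_mem hy]
      have hxy : (x, y) ∉ S := by simp [hS, hx, hy]
      rw [h0, Set.indicator_of_notMem hxy]
      simp [Real.zero_rpow hp0]
    · have h1 : |u x - u y| = 1 := by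
        simp [hu, Set.indicator_of_mem hx, Set.indicator_of_notMem hy]
      have hxy : (x, y) ∈ S := Or.inl ⟨hx, hy⟩
      rw [h1, Real.one_rpow, Set.indicator_of_mem hxy, hk]
      simp only
      rw [Real.rpow_neg (norm_nonneg _), one_div]
    · have h1 : |u x - u y| = 1 := by
        simp [hu, Set.indicator_of_notMem hx, Set.indicator_of_mem hy]
      have hxy : (x, y) ∈ S := Or.inr ⟨hx, hy⟩
      rw [h1, Real.one_rpow, Set.indicator_of_mem hxy, hk]
      simp only
      rw [Real.rpow_neg (norm_nonneg _), one_div]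
    · have h0 : u x - u y = 0 := by
        simp [hu, Set.indicator_of_notMem hx, Set.indicator_of_notMem hy]
      have hxy : (x, y) ∉ S := by simp [hS, hx, hy]
      rw [h0, Set.indicator_of_notMem hxy]
      simp [Real.zero_rpow hp0]
  have hSset : ∀ h : Euc m, {x : Euc m | (x, x + h) ∈ S}
      = {x : Euc m | (x ∈ Q ∧ x + h ∉ Q) ∨ (x ∉ Q ∧ x + h ∈ Q)} := by
    intro h
    ext x
    simp [hS, Set.mem_prod]
  have hVol2 : ∀ h : Euc m, volume {x : Euc m | (x, x + h) ∈ S} ≤ 2 := by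
    intro h
    rw [hSset]
    have hsub : {x : Euc m | (x ∈ Q ∧ x + h ∉ Q) ∨ (x ∉ Q ∧ x + h ∈ Q)}
        ⊆ Q ∪ {x : Euc m | x + h ∈ Q} := by
      rintro x (⟨h1, _⟩ | ⟨_, h2⟩)
      · exact Or.inl h1
      · exact Or.inr h2
    calc volume {x : Euc m | (x ∈ Q ∧ x + h ∉ Q) ∨ (x ∉ Q ∧ x + h ∈ Q)}
        ≤ volume (Q ∪ {x : Euc m | x + h ∈ Q}) := measure_mono hsub
      _ ≤ volume Q + volume {x : Euc m | x + h ∈ Q} := measure_union_le _ _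
      _ = 2 := by
          rw [hQdef, volume_unitCube, volume_shifted_cube]
          norm_num
  have hVol1 : ∀ h : Euc m, ‖h‖ ≤ 1 → volume {x : Euc m | (x, x + h) ∈ S}
      ≤ ENNReal.ofReal (4 * ‖h‖) * ((m : ℝ≥0∞) * 3 ^ m) := by
    intro h hh
    rw [hSset]
    exact volume_diff_le h hh
  have hmain : (∫⁻ x : Euc m, ∫⁻ y : Euc m,
      ENNReal.ofReal (|u x - u y| ^ p / ‖x - y‖ ^ α))
      = ∫⁻ h : Euc m, ENNReal.ofReal (‖h‖ ^ (-α)) *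
          volume {x : Euc m | (x, x + h) ∈ S} := by
    calc (∫⁻ x : Euc m, ∫⁻ y : Euc m,
        ENNReal.ofReal (|u x - u y| ^ p / ‖x - y‖ ^ α))
        = ∫⁻ x : Euc m, ∫⁻ y : Euc m, S.indicator k (x, y) := by
          simp_rw [hpoint]
      _ = ∫⁻ x : Euc m, ∫⁻ h : Euc m, S.indicator k (x, x + h) := by
          refine lintegral_congr fun x => ?_
          exact (lintegral_add_left_eq_self (fun y => S.indicator k (x, y)) x).symm
      _ = ∫⁻ h : Euc m, ∫⁻ x : Euc m, S.indicator k (x, x + h) := by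
          refine lintegral_lintegral_swap ?_
          exact ((hkm.indicator hSm).comp
            (measurable_fst.prodMk (measurable_fst.add measurable_snd))).aemeasurable
      _ = ∫⁻ h : Euc m, ENNReal.ofReal (‖h‖ ^ (-α)) *
            volume {x : Euc m | (x, x + h) ∈ S} := by
          refine lintegral_congr fun h => ?_
          have hmeas : MeasurableSet {x : Euc m | (x, x + h) ∈ S} :=
            hSm.preimage (measurable_id.prodMk (measurable_id.add_const h))
          have heq : (fun x : Euc m => S.indicator k (x, x + h))
              = Set.indicator {x : Euc m | (x, x + h) ∈ S}
                  (fun _ => ENNReal.ofReal (‖h‖ ^ (-α))) := by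
            ext x
            by_cases hxS : (x, x + h) ∈ S
            · rw [Set.indicator_of_mem hxS,
                Set.indicator_of_mem (show x ∈ {x : Euc m | (x, x + h) ∈ S} from hxS), hk]
              simp only
              rw [show x - (x + h) = -h by abel, norm_neg]
            · rw [Set.indicator_of_notMem hxS,
                Set.indicator_of_notMem (show x ∉ {x : Euc m | (x, x + h) ∈ S} from hxS)]
          rw [heq, lintegral_indicator_const hmeas]
  rw [hmain, ← lintegral_add_compl (fun h : Euc m => ENNReal.ofReal (‖h‖ ^ (-α)) *
    volume {x : Euc m | (x, x + h) ∈ S}) (measurableSet_ball (x := (0 : Euc m)) (ε := 1))]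
  refine ENNReal.add_lt_top.2 ⟨?_, ?_⟩
  · -- near piece
    set K : ℝ≥0∞ := (m : ℝ≥0∞) * 3 ^ m * 4 with hK
    have hKne : K ≠ ⊤ := by
      refine ENNReal.mul_ne_top (ENNReal.mul_ne_top (ENNReal.natCast_ne_top m)
        (ENNReal.pow_ne_top ?_)) ?_ <;> simp
    have haux : ∀ r : ℝ, 0 ≤ r → r ^ (-α) * (4 * r) = 4 * r ^ (1 - α) := by
      intro r hr
      rcases eq_or_lt_of_le hr with h0 | h0
      · rw [← h0, Real.zero_rpow (by linarith : -α ≠ 0),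
          Real.zero_rpow (by linarith : (1:ℝ) - α ≠ 0)]
        ring
      · rw [show (1:ℝ) - α = -α + 1 by ring, Real.rpow_add h0, Real.rpow_one]
        ring
    have hbound : ∀ h : Euc m, h ∈ ball (0 : Euc m) 1 →
        ENNReal.ofReal (‖h‖ ^ (-α)) * volume {x : Euc m | (x, x + h) ∈ S}
          ≤ K * ENNReal.ofReal (‖h‖ ^ (1 - α)) := by
      intro h hh
      have hh1 : ‖h‖ ≤ 1 := by
        rw [mem_ball, dist_zero_right] at hh
        linarith
      calc ENNReal.ofReal (‖h‖ ^ (-α)) * volume {x : Euc m | (x, x + h) ∈ S}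
          ≤ ENNReal.ofReal (‖h‖ ^ (-α)) *
              (ENNReal.ofReal (4 * ‖h‖) * ((m : ℝ≥0∞) * 3 ^ m)) :=
            mul_le_mul_right (hVol1 h hh1) _
        _ = ((m : ℝ≥0∞) * 3 ^ m) *
              (ENNReal.ofReal (‖h‖ ^ (-α)) * ENNReal.ofReal (4 * ‖h‖)) := by ring
        _ = ((m : ℝ≥0∞) * 3 ^ m) * ENNReal.ofReal (‖h‖ ^ (-α) * (4 * ‖h‖)) := by
            rw [← ENNReal.ofReal_mul (Real.rpow_nonneg (norm_nonneg _) _)]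
        _ = ((m : ℝ≥0∞) * 3 ^ m) * ENNReal.ofReal (4 * ‖h‖ ^ (1 - α)) := by
            rw [haux _ (norm_nonneg _)]
        _ = ((m : ℝ≥0∞) * 3 ^ m) * (ENNReal.ofReal 4 * ENNReal.ofReal (‖h‖ ^ (1 - α))) := by
            rw [ENNReal.ofReal_mul (by norm_num : (0:ℝ) ≤ 4)]
        _ = K * ENNReal.ofReal (‖h‖ ^ (1 - α)) := by
            rw [show ENNReal.ofReal 4 = (4:ℝ≥0∞) by norm_num]
            ring
    calc (∫⁻ h : Euc m in ball 0 1,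
        ENNReal.ofReal (‖h‖ ^ (-α)) * volume {x : Euc m | (x, x + h) ∈ S})
        ≤ ∫⁻ h : Euc m in ball 0 1, K * ENNReal.ofReal (‖h‖ ^ (1 - α)) :=
          setLIntegral_mono' measurableSet_ball hbound
      _ = K * ∫⁻ h : Euc m in ball 0 1, ENNReal.ofReal (‖h‖ ^ (1 - α)) :=
          lintegral_const_mul' _ _ hKne
      _ < ⊤ := by
          refine ENNReal.mul_lt_top hKne.lt_top ?_
          have h1α : (1:ℝ) - α = -(α - 1) := by ring
          rw [h1α]
          exact near_finite hm (by linarith) (by rw [hαdef]; push_cast; linarith)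
  · -- far piece
    have hbound : ∀ h : Euc m, h ∈ (ball (0 : Euc m) 1)ᶜ →
        ENNReal.ofReal (‖h‖ ^ (-α)) * volume {x : Euc m | (x, x + h) ∈ S}
          ≤ 2 * ENNReal.ofReal (‖h‖ ^ (-α)) := by
      intro h _
      calc ENNReal.ofReal (‖h‖ ^ (-α)) * volume {x : Euc m | (x, x + h) ∈ S}
          ≤ ENNReal.ofReal (‖h‖ ^ (-α)) * 2 := mul_le_mul_right (hVol2 h) _
        _ = 2 * ENNReal.ofReal (‖h‖ ^ (-α)) := mul_comm _ _
    calc (∫⁻ h : Euc m in (ball (0 : Euc m) 1)ᶜ,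
        ENNReal.ofReal (‖h‖ ^ (-α)) * volume {x : Euc m | (x, x + h) ∈ S})
        ≤ ∫⁻ h : Euc m in (ball (0 : Euc m) 1)ᶜ, 2 * ENNReal.ofReal (‖h‖ ^ (-α)) :=
          setLIntegral_mono' measurableSet_ball.compl hbound
      _ = 2 * ∫⁻ h : Euc m in (ball (0 : Euc m) 1)ᶜ, ENNReal.ofReal (‖h‖ ^ (-α)) :=
          lintegral_const_mul' _ _ (by norm_num)
      _ < ⊤ := ENNReal.mul_lt_top (by norm_num) (far_finite hαm)
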